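/- Let D = d+1 and let A be a D×D real matrix such that (i) for every x ∈ ℝ^D with x₁+⋯+x_D = 1, the D-th coordinate of Ax equals 1, and (ii) A preserves orthogonality (orthogonal vectors map to orthogonal vectors). Let L_D = A(ℤ^D), H_k = {z ∈ L_D : z_D = k}, H'_k = {z ∈ ℝ^d : (z,k) ∈ H_k}, and v_i = A e_i = (v'_i, 1) for the standard basis e_1,…,e_D. Then each v'_i ∈ ℝ^d has Euclidean length √(D−1), and H'_{k+1} = {v'_i + x : x ∈ H'_k, 1 ≤ i ≤ D}. -/

import Mathlib

open scoped RealInnerProductSpace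

/-- Projection of `ℝ^{d+1}` onto the first `d` coordinates. -/
def projFirst (d : ℕ) (z : EuclideanSpace ℝ (Fin (d + 1))) : EuclideanSpace ℝ (Fin d) :=
  WithLp.toLp 2 (fun j : Fin d => z j.castSucc)

lemma euclid_sum_apply {ι : Type*} (s : Finset ι) {n : ℕ}
    (f : ι → EuclideanSpace ℝ (Fin n)) (j : Fin n) :
    (∑ i ∈ s, f i) j = ∑ i ∈ s, f i j :=
  map_sum (EuclideanSpace.projₗ j) f s

lemma projFirst_add (d : ℕ) (z w : EuclideanSpace ℝ (Fin (d+1))) :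
    projFirst d (z + w) = projFirst d z + projFirst d w := by
  ext j; simp [projFirst]

lemma inner_split (d : ℕ) (z w : EuclideanSpace ℝ (Fin (d+1))) :
    ⟪z, w⟫ = ⟪projFirst d z, projFirst d w⟫ + z (Fin.last d) * w (Fin.last d) := by
  simp [PiLp.inner_apply, Fin.sum_univ_castSucc, projFirst, mul_comm]

/-- For a linear `A : ℝ^D → ℝ^D`, `D = d+1`, mapping the affine hyperplane
`{Σxᵢ = 1}` into `{last coordinate = 1}` and preserving orthogonality: writing
`A eᵢ = (v'ᵢ, 1)`, each `v'ᵢ` has Euclidean length `√(D-1) = √d`, and the level-`(k+1)`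
slice of the lattice `A(ℤ^D)` is obtained from the level-`k` slice by adding some `v'ᵢ`. -/
theorem stmt_17 (d : ℕ) (hd : 0 < d)
    (A : EuclideanSpace ℝ (Fin (d + 1)) →ₗ[ℝ] EuclideanSpace ℝ (Fin (d + 1)))
    (hA1 : ∀ x : EuclideanSpace ℝ (Fin (d + 1)), (∑ i, x i) = 1 → A x (Fin.last d) = 1)
    (hA2 : ∀ x y : EuclideanSpace ℝ (Fin (d + 1)), ⟪x, y⟫ = 0 → ⟪A x, A y⟫ = 0) :
    (∀ i : Fin (d + 1),
      ‖projFirst d (A (EuclideanSpace.single i (1 : ℝ)))‖ = Real.sqrt d) ∧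
    ∀ k : ℤ,
      {w : EuclideanSpace ℝ (Fin d) | ∃ mm : Fin (d + 1) → ℤ,
          A (WithLp.toLp 2 (fun i => (mm i : ℝ)) : EuclideanSpace ℝ (Fin (d + 1))) (Fin.last d)
              = (k : ℝ) + 1 ∧
          projFirst d (A (WithLp.toLp 2 (fun i => (mm i : ℝ)) : EuclideanSpace ℝ (Fin (d + 1)))) = w}
        = {w : EuclideanSpace ℝ (Fin d) | ∃ (i : Fin (d + 1))
            (x : EuclideanSpace ℝ (Fin d)),
          (∃ mm : Fin (d + 1) → ℤ,
            A (WithLp.toLp 2 (fun i' => (mm i' : ℝ)) : EuclideanSpace ℝ (Fin (d + 1))) (Fin.last d)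
                = (k : ℝ) ∧
            projFirst d (A (WithLp.toLp 2 (fun i' => (mm i' : ℝ)) :
              EuclideanSpace ℝ (Fin (d + 1)))) = x) ∧
          w = projFirst d (A (EuclideanSpace.single i (1 : ℝ))) + x} := by
  constructor
  ·
      set v : Fin (d+1) → EuclideanSpace ℝ (Fin (d+1)) :=
        fun i => A (EuclideanSpace.single i 1) with hv
      have hlast : ∀ i, v i (Fin.last d) = 1 := by
        intro i
        exact hA1 _ (by simp [EuclideanSpace.single_apply])
      have horth : ∀ i j, i ≠ j → ⟪v i, v j⟫ = 0 := by
        intro i j h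
        exact hA2 _ _ (by simp [EuclideanSpace.inner_single_left, EuclideanSpace.single_apply, h.symm])
      have hnorm : ∀ i j, ⟪v i, v i⟫ = ⟪v j, v j⟫ := by
        intro i j
        rcases eq_or_ne i j with rfl | h
        · rfl
        · have h0 : ⟪(EuclideanSpace.single i 1 + EuclideanSpace.single j 1 : EuclideanSpace ℝ (Fin (d+1))),
              EuclideanSpace.single i 1 - EuclideanSpace.single j 1⟫ = 0 := by
            simp [inner_add_left, inner_sub_right, EuclideanSpace.inner_single_left,
              EuclideanSpace.single_apply, h.symm, h]
          have := hA2 _ _ h0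
          rw [map_add, map_sub, inner_add_left, inner_sub_right, inner_sub_right] at this
          change ⟪v i, v i⟫ - ⟪v i, v j⟫ + (⟪v j, v i⟫ - ⟪v j, v j⟫) = 0 at this
          have e1 := horth i j h
          have e2 := horth j i h.symm
          linarith [this, e1, e2]
      set c2 : ℝ := ⟪v 0, v 0⟫ with hc2
      have hnc : ∀ i, ⟪v i, v i⟫ = c2 := fun i => hnorm i 0
      have hc2ne : c2 ≠ 0 := by
        intro h
        have hv0 : v 0 = 0 := inner_self_eq_zero.mp (hc2 ▸ h)
        have h1 := hlast 0
        rw [hv0] at h1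
        simpa using h1
      set s : EuclideanSpace ℝ (Fin (d+1)) := ∑ i, v i with hs
      have hslast : s (Fin.last d) = (d : ℝ) + 1 := by
        rw [hs, euclid_sum_apply]
        simp [hlast]
      have hsv : ∀ j, ⟪s, v j⟫ = c2 := by
        intro j
        rw [hs, sum_inner]
        rw [Finset.sum_eq_single j (fun i _ hij => horth i j hij) (by simp)]
        exact hnc j
      -- the projected difference vectors
      set p : Fin d → EuclideanSpace ℝ (Fin d) :=
        fun i => projFirst d (v i.succ - v 0) with hp
      have hdiff_last : ∀ i : Fin d, (v i.succ - v 0) (Fin.last d) = 0 := by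
        intro i
        simp [PiLp.sub_apply, hlast]
      have hpli : LinearIndependent ℝ p := by
        rw [Fintype.linearIndependent_iff]
        intro g hg j
        have hbig : (∑ i, g i • (v i.succ - v 0)) = 0 := by
          ext m
          rw [euclid_sum_apply]
          induction m using Fin.lastCases with
          | last =>
            simp only [PiLp.smul_apply, hdiff_last, smul_zero]
            simp
          | cast m =>
            have := congrArg (fun z : EuclideanSpace ℝ (Fin d) => z m) hg
            rw [euclid_sum_apply] at this
            simpa [hp, projFirst, PiLp.smul_apply, PiLp.sub_apply] using this
        have := congrArg (fun z => ⟪z, v j.succ⟫) hbig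
        simp only [inner_zero_left, sum_inner, inner_smul_left] at this
        rw [Finset.sum_eq_single j] at this
        · rw [inner_sub_left, hnc, horth 0 j.succ (Fin.succ_ne_zero j).symm ] at this
          simp only [RCLike.star_def, conj_trivial, sub_zero] at this
          exact (mul_eq_zero.mp this).resolve_right hc2ne
        · intro i _ hij
          rw [inner_sub_left, horth i.succ j.succ (by simpa using hij),
            horth 0 j.succ (Fin.succ_ne_zero j).symm]
          simp
        · simp
      haveI : Nonempty (Fin d) := ⟨⟨0, hd⟩⟩
      have hsp : Submodule.span ℝ (Set.range p) = ⊤ :=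
        hpli.span_eq_top_of_card_eq_finrank (by simp)
      set ps : EuclideanSpace ℝ (Fin d) := projFirst d s with hps
      have hperp : ∀ i, ⟪p i, ps⟫ = 0 := by
        intro i
        have h1 : ⟪s, v i.succ - v 0⟫ = 0 := by
          rw [inner_sub_right, hsv, hsv, sub_self]
        rw [inner_split, hdiff_last, mul_zero, add_zero] at h1
        rw [real_inner_comm]
        exact h1
      have hps0 : ps = 0 := by
        have hmem : ps ∈ Submodule.span ℝ (Set.range p) := hsp ▸ Submodule.mem_top
        obtain ⟨a, ha⟩ := (Submodule.mem_span_range_iff_exists_fun ℝ).mp hmem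
        have : ⟪ps, ps⟫ = 0 := by
          nth_rewrite 1 [← ha]
          rw [sum_inner]
          simp only [inner_smul_left, RCLike.star_def, conj_trivial]
          exact Finset.sum_eq_zero fun i _ => by rw [hperp i, mul_zero]
        exact inner_self_eq_zero.mp this
      have hss : ⟪s, s⟫ = ((d : ℝ) + 1) * c2 := by
        nth_rewrite 2 [hs]
        rw [inner_sum]
        simp only [hsv]
        simp [mul_comm]
      have hss2 : ⟪s, s⟫ = ((d : ℝ) + 1) ^ 2 := by
        rw [inner_split, ← hps, hps0, inner_zero_left, zero_add, hslast]
        ring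
      have hc2val : c2 = (d : ℝ) + 1 := by
        have hdne : (d : ℝ) + 1 ≠ 0 := by positivity
        have hkey : ((d : ℝ) + 1) * c2 = ((d : ℝ) + 1) * ((d : ℝ) + 1) := by
          rw [← hss, hss2]; ring
        exact mul_left_cancel₀ hdne hkey
      intro i
      have key : ⟪projFirst d (v i), projFirst d (v i)⟫ = (d : ℝ) := by
        have := hnc i
        rw [inner_split, hlast, mul_one, hc2val] at this
        linarith
      rw [real_inner_self_eq_norm_sq] at key
      rw [← Real.sqrt_sq (norm_nonneg _), key]
  ·
      have hlast1 : ∀ i : Fin (d+1), A (EuclideanSpace.single i 1) (Fin.last d) = 1 :=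
        fun i => hA1 _ (by simp [EuclideanSpace.single_apply])
      have hcoe : ∀ mm : Fin (d+1) → ℤ,
          (WithLp.toLp 2 (fun i => (mm i : ℝ)) : EuclideanSpace ℝ (Fin (d+1)))
            = ∑ i, (mm i : ℝ) • EuclideanSpace.single i (1:ℝ) := by
        intro mm; ext j
        rw [euclid_sum_apply]
        simp [EuclideanSpace.single_apply, PiLp.smul_apply]
      have lastA : ∀ mm : Fin (d+1) → ℤ,
          A (WithLp.toLp 2 (fun i => (mm i : ℝ)) : EuclideanSpace ℝ (Fin (d+1))) (Fin.last d)
            = ∑ i, (mm i : ℝ) := by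
        intro mm
        conv_lhs => rw [hcoe mm, map_sum, euclid_sum_apply]
        refine Finset.sum_congr rfl fun i _ => ?_
        rw [map_smul, PiLp.smul_apply, hlast1 i, smul_eq_mul, mul_one]
      have hsplitA : ∀ (mm : Fin (d+1) → ℤ) (i : Fin (d+1)),
          A (WithLp.toLp 2 (fun i' => (mm i' : ℝ)) : EuclideanSpace ℝ (Fin (d+1)))
            = A (WithLp.toLp 2 (fun i' => (((mm - Pi.single i 1 : Fin (d+1) → ℤ) i' : ℤ) : ℝ)) : EuclideanSpace ℝ (Fin (d+1)))
              + A (EuclideanSpace.single i (1:ℝ)) := by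
        intro mm i
        rw [← map_add]
        congr 1
        ext j
        simp only [PiLp.add_apply, EuclideanSpace.single_apply, Pi.sub_apply, Pi.single_apply,
          Int.cast_sub]
        push_cast [apply_ite (Int.cast : ℤ → ℝ)]
        split_ifs <;> simp
      intro k
      ext w
      simp only [Set.mem_setOf_eq]
      constructor
      · rintro ⟨mm, hl, hpj⟩
        refine ⟨0, projFirst d (A (WithLp.toLp 2 (fun i' => (((mm - Pi.single 0 1 : Fin (d+1) → ℤ) i' : ℤ) : ℝ)) :
            EuclideanSpace ℝ (Fin (d+1)))), ⟨mm - Pi.single 0 1, ?_, rfl⟩, ?_⟩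
        · rw [lastA]
          have h1 : ∑ i, (((mm - Pi.single 0 1 : Fin (d+1) → ℤ) i : ℤ) : ℝ) = (∑ i, (mm i : ℝ)) - 1 := by
            simp only [Pi.sub_apply, Pi.single_apply, Int.cast_sub]
            rw [Finset.sum_sub_distrib]
            push_cast [apply_ite (Int.cast : ℤ → ℝ)]
            simp
          rw [h1, ← lastA mm, hl]; ring
        · rw [hsplitA mm 0, projFirst_add] at hpj
          rw [← hpj, add_comm]
      · rintro ⟨i, x, ⟨mm, hl, hx⟩, hw⟩
        refine ⟨mm + Pi.single i 1, ?_, ?_⟩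
        · rw [lastA]
          have h1 : ∑ j, (((mm + Pi.single i 1 : Fin (d+1) → ℤ) j : ℤ) : ℝ) = (∑ j, (mm j : ℝ)) + 1 := by
            simp only [Pi.add_apply, Pi.single_apply, Int.cast_add]
            rw [Finset.sum_add_distrib]
            push_cast [apply_ite (Int.cast : ℤ → ℝ)]
            simp
          rw [h1, ← lastA mm, hl]
        · rw [hsplitA (mm + Pi.single i 1) i]
          have h2 : A (WithLp.toLp 2 (fun i' => (((mm + Pi.single i 1 - Pi.single i 1 : Fin (d+1) → ℤ) i' : ℤ) : ℝ)) :
              EuclideanSpace ℝ (Fin (d+1)))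
              = A (WithLp.toLp 2 (fun i' => (mm i' : ℝ)) : EuclideanSpace ℝ (Fin (d+1))) := by
            congr 1
            ext j
            simp
          rw [h2, projFirst_add, hx, hw, add_comm]
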